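/- Let A be a skew brace. If the multiplicative group A_⊙ is abelian, then the additive group A_⊕ is metabelian (solvable of derived length at most 2). -/

import Mathlib

/-! Auxiliary material for Itô's theorem (a product of two abelian subgroups is metabelian)
and its application to skew braces. -/

section ItoHelpers

open scoped commutatorElement

variable {G : Type*} [Group G]

private lemma sb_comm_inv_left {x y : G} (h : x * y = y * x) : x⁻¹ * y = y * x⁻¹ :=
  ((show Commute x y from h).inv_left).eq

private lemma commutator_drop_right {a v : G} (h : a * v = v * a) (u : G) :
    ⁅a, u * v⁆ = ⁅a, u⁆ := by
  have hv : v * a⁻¹ = a⁻¹ * v := (sb_comm_inv_left h).symm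
  simp only [commutatorElement_def, mul_inv_rev, ← mul_assoc]
  congr 1
  rw [mul_assoc (a * u) v a⁻¹, hv, ← mul_assoc, mul_assoc _ v v⁻¹, mul_inv_cancel, mul_one]

private lemma commutator_drop_left {v b : G} (h : v * b = b * v) (u : G) :
    ⁅u * v, b⁆ = ⁅u, b⁆ := by
  have h1 : ⁅b, u * v⁆ = ⁅b, u⁆ := commutator_drop_right h.symm u
  calc ⁅u * v, b⁆ = ⁅b, u * v⁆⁻¹ := by rw [commutatorElement_inv]
    _ = ⁅b, u⁆⁻¹ := by rw [h1]
    _ = ⁅u, b⁆ := by rw [commutatorElement_inv]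

private lemma conj_fix_left {g a : G} (hcomm : g * a = a * g) (b : G) :
    g * ⁅a, b⁆ * g⁻¹ = ⁅a, g * b * g⁻¹⁆ := by
  rw [conjugate_commutatorElement]
  congr 1
  rw [hcomm, mul_assoc, mul_inv_cancel, mul_one]

private lemma conj_fix_right {g b : G} (hcomm : g * b = b * g) (a : G) :
    g * ⁅a, b⁆ * g⁻¹ = ⁅g * a * g⁻¹, b⁆ := by
  rw [conjugate_commutatorElement]
  congr 1
  rw [hcomm, mul_assoc, mul_inv_cancel, mul_one]

private lemma conj_of_eq {g u w v : G} (h : g⁻¹ * u * g = w * v) (hc : v * g = g * v) :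
    g * w * g⁻¹ = u * v⁻¹ := by
  have hw : w = g⁻¹ * u * g * v⁻¹ := by rw [h, mul_inv_cancel_right]
  have hc' : v⁻¹ * g⁻¹ = g⁻¹ * v⁻¹ := by rw [← mul_inv_rev, ← mul_inv_rev, hc]
  rw [hw]
  simp only [mul_assoc]
  rw [hc']
  simp only [inv_mul_cancel_left, mul_inv_cancel_left]

private lemma commutator_mul_left' (u v w : G) :
    ⁅u * v, w⁆ = u * ⁅v, w⁆ * u⁻¹ * ⁅u, w⁆ := by
  simp only [commutatorElement_def]
  group

private lemma commutator_mul_right' (u v w : G) :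
    ⁅u, v * w⁆ = ⁅u, v⁆ * (v * ⁅u, w⁆ * v⁻¹) := by
  simp only [commutatorElement_def]
  group

/-- **Itô's theorem**: a group which is the product of two abelian subgroups is metabelian. -/
private theorem ito_derivedSeries_two (A B : Subgroup G)
    (hA : ∀ x ∈ A, ∀ y ∈ A, x * y = y * x)
    (hB : ∀ x ∈ B, ∀ y ∈ B, x * y = y * x)
    (hfac : ∀ g : G, ∃ a ∈ A, ∃ b ∈ B, g = a * b) :
    derivedSeries G 2 = ⊥ := by
  have hfacBA : ∀ g : G, ∃ b ∈ B, ∃ a ∈ A, g = b * a := by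
    intro g
    obtain ⟨a, ha, b, hb, hg⟩ := hfac g⁻¹
    exact ⟨b⁻¹, B.inv_mem hb, a⁻¹, A.inv_mem ha, by rw [← inv_inv g, hg, mul_inv_rev]⟩
  set T : Set G := {x | ∃ a ∈ A, ∃ b ∈ B, x = ⁅a, b⁆} with hT
  -- T is closed under conjugation
  have conjT : ∀ g : G, ∀ x ∈ T, g * x * g⁻¹ ∈ T := by
    rintro g x ⟨a, ha, b, hb, rfl⟩
    obtain ⟨a', ha', b', hb', rfl⟩ := hfac g
    obtain ⟨α, hα, β, hβ, h1⟩ := hfac (b' * a * b'⁻¹)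
    have e1 : b' * ⁅a, b⁆ * b'⁻¹ = ⁅α, b⁆ := by
      rw [conj_fix_right (hB b' hb' b hb) a, h1, commutator_drop_left (hB β hβ b hb) α]
    obtain ⟨β₂, hβ₂, α₂, hα₂, h2⟩ := hfacBA (a' * b * a'⁻¹)
    have e2 : a' * ⁅α, b⁆ * a'⁻¹ = ⁅α, β₂⁆ := by
      rw [conj_fix_left (hA a' ha' α hα) b, h2,
        commutator_drop_right (hA α hα α₂ hα₂) β₂]
    refine ⟨α, hα, β₂, hβ₂, ?_⟩
    have e3 : a' * b' * ⁅a, b⁆ * (a' * b')⁻¹ = a' * (b' * ⁅a, b⁆ * b'⁻¹) * a'⁻¹ := by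
      rw [mul_inv_rev]
      group
    rw [e3, e1, e2]
  -- Itô's four-step computation: elements of T pairwise commute
  have key : ∀ x ∈ T, ∀ y ∈ T, x * y = y * x := by
    rintro x ⟨a, ha, b, hb, rfl⟩ y ⟨a', ha', b', hb', rfl⟩
    obtain ⟨α₁, hα₁, β₁, hβ₁, h1⟩ := hfac (b'⁻¹ * a * b')
    obtain ⟨β₂, hβ₂, α₂, hα₂, h2⟩ := hfacBA (a'⁻¹ * b * a')
    have h1' : b'⁻¹ * a * b'⁻¹⁻¹ = α₁ * β₁ := by rwa [inv_inv]
    have h2' : a'⁻¹ * b * a'⁻¹⁻¹ = β₂ * α₂ := by rwa [inv_inv]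
    have s1 : b'⁻¹ * ⁅a, b⁆ * b'⁻¹⁻¹ = ⁅α₁, b⁆ := by
      rw [conj_fix_right (sb_comm_inv_left (hB b' hb' b hb)) a, h1',
        commutator_drop_left (hB β₁ hβ₁ b hb) α₁]
    have s2 : a'⁻¹ * ⁅α₁, b⁆ * a'⁻¹⁻¹ = ⁅α₁, β₂⁆ := by
      rw [conj_fix_left (sb_comm_inv_left (hA a' ha' α₁ hα₁)) b, h2',
        commutator_drop_right (hA α₁ hα₁ α₂ hα₂) β₂]
    have s3 : b' * ⁅α₁, β₂⁆ * b'⁻¹ = ⁅a, β₂⁆ := by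
      rw [conj_fix_right (hB b' hb' β₂ hβ₂) α₁,
        conj_of_eq h1 (hB β₁ hβ₁ b' hb'),
        commutator_drop_left (sb_comm_inv_left (hB β₁ hβ₁ β₂ hβ₂)) a]
    have s4 : a' * ⁅a, β₂⁆ * a'⁻¹ = ⁅a, b⁆ := by
      rw [conj_fix_left (hA a' ha' a ha) β₂,
        conj_of_eq h2 (hA α₂ hα₂ a' ha'),
        commutator_drop_right ((sb_comm_inv_left (hA α₂ hα₂ a ha)).symm) b]
    have assemble : ⁅a', b'⁆ * ⁅a, b⁆ * ⁅a', b'⁆⁻¹ =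
        a' * (b' * (a'⁻¹ * (b'⁻¹ * ⁅a, b⁆ * b'⁻¹⁻¹) * a'⁻¹⁻¹) * b'⁻¹) * a'⁻¹ := by
      simp only [commutatorElement_def, mul_inv_rev, inv_inv]
      group
    have hfix : ⁅a', b'⁆ * ⁅a, b⁆ * ⁅a', b'⁆⁻¹ = ⁅a, b⁆ := by
      rw [assemble, s1, s2, s3, s4]
    exact (mul_inv_eq_iff_eq_mul.mp hfix).symm
  -- the closure of T
  set N : Subgroup G := Subgroup.closure T with hN
  have hsub : ∀ x ∈ T, x ∈ N := fun x hx => Subgroup.subset_closure hx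
  have hnormal : ∀ g : G, ∀ n ∈ N, g * n * g⁻¹ ∈ N := by
    intro g n hn
    have himg : (MulAut.conj g).toMonoidHom '' T ⊆ T := by
      rintro _ ⟨x, hx, rfl⟩
      simpa [MulAut.conj] using conjT g x hx
    have hle : N.map (MulAut.conj g).toMonoidHom ≤ N := by
      rw [hN, MonoidHom.map_closure]
      exact Subgroup.closure_mono himg
    have hm : (MulAut.conj g).toMonoidHom n ∈ N.map (MulAut.conj g).toMonoidHom :=
      Subgroup.mem_map_of_mem _ hn
    simpa [MulAut.conj] using hle hm
  -- N is abelian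
  have habel : N ≤ Subgroup.centralizer (N : Set G) := by
    rw [hN]
    refine (Subgroup.closure_le _).mpr ?_
    intro t ht
    refine Subgroup.mem_centralizer_iff.mpr ?_
    intro h hh
    have : N ≤ Subgroup.centralizer {t} := by
      rw [hN]
      refine (Subgroup.closure_le _).mpr ?_
      intro s hs
      refine Subgroup.mem_centralizer_iff.mpr ?_
      intro u hu
      rw [Set.mem_singleton_iff] at hu
      subst hu
      exact key u ht s hs
    have ht' := Subgroup.mem_centralizer_iff.mp (this hh) t rfl
    exact ht'.symm
  -- the commutator subgroup is contained in N
  have hcomm_le : commutator G ≤ N := by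
    rw [commutator_def, Subgroup.commutator_le]
    intro g _ h _
    obtain ⟨a₁, ha₁, b₁, hb₁, rfl⟩ := hfac g
    obtain ⟨a₂, ha₂, b₂, hb₂, rfl⟩ := hfac h
    have m1 : ⁅b₁, a₂ * b₂⁆ ∈ N := by
      rw [commutator_mul_right' b₁ a₂ b₂,
        (commutatorElement_eq_one_iff_commute).mpr (show Commute b₁ b₂ from hB b₁ hb₁ b₂ hb₂)]
      rw [mul_one, mul_inv_cancel, mul_one]
      have : ⁅a₂, b₁⁆ ∈ N := hsub _ ⟨a₂, ha₂, b₁, hb₁, rfl⟩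
      rw [← commutatorElement_inv]
      exact N.inv_mem this
    have m2 : ⁅a₁, a₂ * b₂⁆ ∈ N := by
      rw [commutator_mul_right' a₁ a₂ b₂,
        (commutatorElement_eq_one_iff_commute).mpr (show Commute a₁ a₂ from hA a₁ ha₁ a₂ ha₂),
        one_mul]
      exact hnormal a₂ _ (hsub _ ⟨a₁, ha₁, b₂, hb₂, rfl⟩)
    rw [commutator_mul_left' a₁ b₁ (a₂ * b₂)]
    exact N.mul_mem (hnormal a₁ _ m1) m2
  -- conclude
  have hbot : ⁅N, N⁆ = ⊥ := Subgroup.commutator_eq_bot_iff_le_centralizer.mpr habel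
  have h2 : derivedSeries G 2 ≤ ⁅N, N⁆ := by
    have h1 : derivedSeries G 1 ≤ N := by
      rw [derivedSeries_one]
      exact hcomm_le
    exact Subgroup.commutator_mono h1 h1
  rw [hbot] at h2
  exact le_bot_iff.mp h2

end ItoHelpers

section SkewBrace

variable {A : Type*} [AddGroup A] [Group A]

private lemma sb_mul_zero (hl : ∀ a b c : A, a * (b + c) = a * b + -a + a * c) (a : A) :
    a * (0 : A) = a := by
  have h := hl a 0 0
  rw [add_zero] at h
  have h2 : a * 0 + (0 : A) = a * 0 + (-a + a * 0) := by
    rw [add_zero, ← add_assoc]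
    exact h
  have h3 := (add_left_cancel h2).symm
  exact (neg_add_eq_zero.mp h3).symm

private lemma sb_zero_eq_one (hl : ∀ a b c : A, a * (b + c) = a * b + -a + a * c) :
    (0 : A) = 1 := by
  have := sb_mul_zero hl 1
  rwa [one_mul] at this

private lemma sb_neg (hl : ∀ a b c : A, a * (b + c) = a * b + -a + a * c) (a b : A) :
    -a + a * (-b) = -(a * b) + a := by
  have h := hl a b (-b)
  rw [add_neg_cancel, sb_mul_zero hl, add_assoc] at h
  calc -a + a * (-b) = -(a * b) + (a * b + (-a + a * (-b))) := by rw [neg_add_cancel_left]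
    _ = -(a * b) + a := by rw [← h]

private lemma sb_lam_add (hl : ∀ a b c : A, a * (b + c) = a * b + -a + a * c) (a x y : A) :
    -a + a * (x + y) = (-a + a * x) + (-a + a * y) := by
  rw [hl]
  simp only [← add_assoc]

private lemma sb_lam_comp (hl : ∀ a b c : A, a * (b + c) = a * b + -a + a * c) (a b x : A) :
    -(a * b) + (a * b) * x = -a + a * (-b + b * x) := by
  rw [hl a (-b) (b * x), mul_assoc]
  simp only [← add_assoc]
  rw [sb_neg hl, add_assoc (-(a * b)) a (-a), add_neg_cancel, add_zero]

/-- The lambda maps of a skew brace, as multiplicative automorphisms of the additive group. -/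
private def sbLam (hl : ∀ a b c : A, a * (b + c) = a * b + -a + a * c) :
    A →* MulAut (Multiplicative A) where
  toFun a :=
    { toFun := fun x => Multiplicative.ofAdd (-a + a * x.toAdd)
      invFun := fun y => Multiplicative.ofAdd (a⁻¹ * (a + y.toAdd))
      left_inv := fun x => by
        simp only [toAdd_ofAdd, add_neg_cancel_left, inv_mul_cancel_left, ofAdd_toAdd]
      right_inv := fun y => by
        simp only [toAdd_ofAdd, mul_inv_cancel_left, neg_add_cancel_left, ofAdd_toAdd]
      map_mul' := fun x y => by
        simp only [toAdd_mul, ← ofAdd_add]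
        exact congrArg _ (sb_lam_add hl a _ _) }
  map_one' := by
    ext x
    show Multiplicative.ofAdd (-(1 : A) + 1 * x.toAdd) = x
    rw [one_mul, ← sb_zero_eq_one hl, neg_zero, zero_add, ofAdd_toAdd]
  map_mul' a b := by
    ext x
    show Multiplicative.ofAdd (-(a * b) + (a * b) * x.toAdd) =
      Multiplicative.ofAdd (-a + a * (Multiplicative.ofAdd (-b + b * x.toAdd)).toAdd)
    rw [toAdd_ofAdd]
    exact congrArg _ (sb_lam_comp hl a b _)

/-- The graph of the identity map, as a homomorphism from the multiplicative group to the
semidirect product of the additive group by the multiplicative group. -/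
private def sbGamma (hl : ∀ a b c : A, a * (b + c) = a * b + -a + a * c) :
    A →* SemidirectProduct (Multiplicative A) A (sbLam hl) where
  toFun a := ⟨Multiplicative.ofAdd a, a⟩
  map_one' := by
    refine SemidirectProduct.ext ?_ rfl
    show Multiplicative.ofAdd (1 : A) = 1
    rw [← sb_zero_eq_one hl]
    rfl
  map_mul' a b := by
    refine SemidirectProduct.ext ?_ rfl
    show Multiplicative.ofAdd (a * b) =
      Multiplicative.ofAdd a * (sbLam hl a) (Multiplicative.ofAdd b)
    show Multiplicative.ofAdd (a * b) =
      Multiplicative.ofAdd a * Multiplicative.ofAdd (-a + a * (Multiplicative.ofAdd b).toAdd)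
    rw [toAdd_ofAdd, ← ofAdd_add, add_neg_cancel_left]

end SkewBrace

/-- If the multiplicative group of a skew brace is abelian, then its additive group is
metabelian (solvable of derived length at most `2`). -/
theorem skew_brace_mul_abelian_imp_add_metabelian
    (A : Type*) [AddGroup A] [Group A]
    (hl : ∀ a b c : A, a * (b + c) = a * b + -a + a * c)
    (hcomm : ∀ a b : A, a * b = b * a) :
    derivedSeries (Multiplicative A) 2 = ⊥ := by
  let φ := sbLam (A := A) hl
  let γ := sbGamma (A := A) hl
  set Pr : Subgroup (SemidirectProduct (Multiplicative A) A φ) := γ.range with hPr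
  set Qr : Subgroup (SemidirectProduct (Multiplicative A) A φ) :=
    (SemidirectProduct.inr : A →* _).range with hQr
  have hA : ∀ x ∈ Pr, ∀ y ∈ Pr, x * y = y * x := by
    rintro x ⟨a, rfl⟩ y ⟨b, rfl⟩
    rw [← map_mul, ← map_mul, hcomm]
  have hB : ∀ x ∈ Qr, ∀ y ∈ Qr, x * y = y * x := by
    rintro x ⟨a, rfl⟩ y ⟨b, rfl⟩
    rw [← map_mul, ← map_mul, hcomm]
  have hfac : ∀ g : SemidirectProduct (Multiplicative A) A φ,
      ∃ x ∈ Pr, ∃ y ∈ Qr, g = x * y := by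
    intro g
    refine ⟨γ g.left.toAdd, ⟨g.left.toAdd, rfl⟩,
      SemidirectProduct.inr (g.left.toAdd⁻¹ * g.right), ⟨_, rfl⟩, ?_⟩
    refine SemidirectProduct.ext ?_ ?_
    · show g.left = (γ g.left.toAdd * SemidirectProduct.inr (g.left.toAdd⁻¹ * g.right)).left
      rw [SemidirectProduct.mul_left]
      show g.left = Multiplicative.ofAdd g.left.toAdd * (φ g.left.toAdd) 1
      rw [map_one, mul_one, ofAdd_toAdd]
    · show g.right = g.left.toAdd * (g.left.toAdd⁻¹ * g.right)
      rw [mul_inv_cancel_left]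
  have h2 := ito_derivedSeries_two Pr Qr hA hB hfac
  have h3 := map_derivedSeries_le_derivedSeries
    (SemidirectProduct.inl : Multiplicative A →* SemidirectProduct (Multiplicative A) A φ) 2
  rw [h2, le_bot_iff] at h3
  exact (Subgroup.map_eq_bot_iff_of_injective _ SemidirectProduct.inl_injective).mp h3
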